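/- For α, θ > 0 there exists R > 0 such that for all (x,μ) with x² + μ² ≥ R², the function W(x,μ) = x²/2 + (θx+μ)²/(2αθ) satisfies ∇W(x,μ)·V(x,μ) < 0, where V is the drift V(x,μ) = (-x³+x-μ, -(α-θ)μ+θ(x³-x)). Consequently every solution of the ODE system is bounded forward in time. -/

import Mathlib

/-- There is `R > 0` such that `∇W · V < 0` outside the ball of radius `R`, where
`W(x,μ) = x²/2 + (θx+μ)²/(2αθ)` and `V` is the drift of the deterministic system;
consequently every solution of the ODE system is bounded forward in time. -/
theorem lyapunov_confinement (α θ : ℝ) (hα : 0 < α) (hθ : 0 < θ) :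
    ∃ R : ℝ, 0 < R ∧
      (∀ x μ : ℝ, R ^ 2 ≤ x ^ 2 + μ ^ 2 →
        (x + (θ * x + μ) / α) * (-x ^ 3 + x - μ)
          + ((θ * x + μ) / (α * θ)) * (-(α - θ) * μ + θ * (x ^ 3 - x)) < 0) ∧
      (∀ x μ : ℝ → ℝ,
        (∀ t, HasDerivAt x (-(x t) ^ 3 + x t - μ t) t) →
        (∀ t, HasDerivAt μ (-(α - θ) * μ t + θ * ((x t) ^ 3 - x t)) t) →
        ∃ M : ℝ, ∀ t : ℝ, 0 ≤ t → (x t) ^ 2 + (μ t) ^ 2 ≤ M) := by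
  have hαθ : 0 < α * θ := mul_pos hα hθ
  set R : ℝ := (2 + 2 * θ) * (1 + 2 * θ) with hRdef
  have hRpos : 0 < R := by positivity
  have key : ∀ x μ : ℝ, R ^ 2 ≤ x ^ 2 + μ ^ 2 →
      (x + (θ * x + μ) / α) * (-x ^ 3 + x - μ)
        + ((θ * x + μ) / (α * θ)) * (-(α - θ) * μ + θ * (x ^ 3 - x)) < 0 := by
    intro x μ h
    have hcore : θ * (-x ^ 4 + x ^ 2 - 2 * x * μ) - μ ^ 2 < 0 := by
      rcases le_or_gt (2 + 2 * θ) (x ^ 2) with hx | hx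
      · nlinarith [sq_nonneg (2 * θ * x + μ), sq_nonneg μ, mul_pos hθ hθ, sq_nonneg x,
          mul_nonneg hθ.le (sq_nonneg x)]
      · nlinarith [sq_nonneg (2 * θ * x + μ), sq_nonneg μ, mul_pos hθ hθ, sq_nonneg x,
          mul_nonneg hθ.le (sq_nonneg (x * x)),
          mul_nonneg (mul_nonneg hθ.le hθ.le) (sq_nonneg x), sq_nonneg (x ^ 2 - 1)]
    have heq : (x + (θ * x + μ) / α) * (-x ^ 3 + x - μ)
        + ((θ * x + μ) / (α * θ)) * (-(α - θ) * μ + θ * (x ^ 3 - x))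
        = (θ * (-x ^ 4 + x ^ 2 - 2 * x * μ) - μ ^ 2) / θ := by
      field_simp
      ring
    rw [heq]
    exact div_neg_of_neg_of_pos hcore hθ
  refine ⟨R, hRpos, key, ?_⟩
  intro x μ hx hμ
  set g : ℝ → ℝ := fun t =>
    x t * x t / 2 + (θ * x t + μ t) * (θ * x t + μ t) / (2 * α * θ) with hgdef
  have hg : ∀ t, HasDerivAt g ((x t + (θ * x t + μ t) / α) * (-(x t) ^ 3 + x t - μ t)
      + ((θ * x t + μ t) / (α * θ)) * (-(α - θ) * μ t + θ * ((x t) ^ 3 - x t))) t := by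
    intro t
    have h1 := ((hx t).mul (hx t)).div_const 2
    have h2 := (((hx t).const_mul θ).add (hμ t))
    have h3 := (h2.mul h2).div_const (2 * α * θ)
    convert h1.add h3 using 1
    · rfl
    · rfl
    · rfl
    simp only [Pi.add_apply]
    field_simp
    ring
  have hgc : Continuous g :=
    continuous_iff_continuousAt.mpr fun t => (hg t).continuousAt
  have hgform : ∀ a b : ℝ, a * a / 2 + (θ * a + b) * (θ * a + b) / (2 * α * θ)
      = (a * a * (α * θ) + (θ * a + b) * (θ * a + b)) / (2 * α * θ) := by
    intro a b; field_simp
  set c1 : ℝ := (α * θ + θ ^ 2 + 1) / (2 * α * θ) with hc1def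
  have hc1 : 0 < c1 := by positivity
  -- upper bound on the ball
  have hup : ∀ a b : ℝ, a ^ 2 + b ^ 2 ≤ R ^ 2 →
      a * a / 2 + (θ * a + b) * (θ * a + b) / (2 * α * θ) ≤ c1 * R ^ 2 := by
    intro a b h
    rw [hgform]
    have hc1R : c1 * R ^ 2 = ((α * θ + θ ^ 2 + 1) * R ^ 2) / (2 * α * θ) := by
      rw [hc1def, div_mul_eq_mul_div]
    rw [hc1R, div_le_div_iff₀ (by positivity) (by positivity)]
    nlinarith [sq_nonneg (a - θ * b), mul_pos hα hθ, sq_nonneg b, sq_nonneg a,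
      mul_nonneg hαθ.le (sq_nonneg b), mul_le_mul_of_nonneg_left h hαθ.le]
  -- coercivity lower bound
  set c2 : ℝ := 2 + 4 * θ ^ 2 + 4 * α * θ with hc2def
  have hc2 : 0 < c2 := by positivity
  have hlow : ∀ a b : ℝ, a ^ 2 + b ^ 2
      ≤ c2 * (a * a / 2 + (θ * a + b) * (θ * a + b) / (2 * α * θ)) := by
    intro a b
    rw [hgform, ← mul_div_assoc, le_div_iff₀ (by positivity)]
    nlinarith [mul_nonneg hαθ.le (sq_nonneg (2 * θ * a + b)), sq_nonneg (2 * θ * a + b),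
      mul_nonneg (mul_nonneg hαθ.le hαθ.le) (sq_nonneg a), sq_nonneg (θ * a + b),
      mul_nonneg (sq_nonneg θ) (sq_nonneg (θ * a + b)),
      mul_nonneg hαθ.le (sq_nonneg (θ * a + b)),
      mul_nonneg (mul_nonneg hαθ.le (sq_nonneg θ)) (sq_nonneg a)]
  have hgnonneg : ∀ t, 0 ≤ g t := by
    intro t
    have h1 : 0 ≤ x t * x t := mul_self_nonneg _
    have h2 : 0 ≤ (θ * x t + μ t) * (θ * x t + μ t) := mul_self_nonneg _
    have : (0:ℝ) < 2 * α * θ := by positivity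
    positivity
  set B : ℝ := g 0 + c1 * R ^ 2 + 1 with hBdef
  have hg0 : g 0 ≤ B := by nlinarith [sq_nonneg R, mul_nonneg hc1.le (sq_nonneg R)]
  have hbound : ∀ t, 0 ≤ t → g t ≤ B := by
    by_contra hcon
    push_neg at hcon
    obtain ⟨T, hT0, hTB⟩ := hcon
    set S := {t : ℝ | t ∈ Set.Icc 0 T ∧ g t ≤ B} with hSdef
    have hSne : S.Nonempty := ⟨0, Set.mem_Icc.mpr ⟨le_refl 0, hT0⟩, hg0⟩
    have hSbdd : BddAbove S := ⟨T, fun t ht => ht.1.2⟩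
    have hSclosed : IsClosed S := by
      have : S = Set.Icc 0 T ∩ g ⁻¹' Set.Iic B := rfl
      rw [this]
      exact isClosed_Icc.inter (IsClosed.preimage hgc isClosed_Iic)
    set s := sSup S with hsdef
    have hs : s ∈ S := hSclosed.csSup_mem hSne hSbdd
    have hsT : s < T := by
      rcases lt_or_eq_of_le hs.1.2 with h | h
      · exact h
      · exact absurd (h ▸ hs.2) (not_le.mpr hTB)
    have hint : ∀ t, s < t → t ≤ T → B < g t := by
      intro t h1 h2
      by_contra hle
      push_neg at hle
      have htS : t ∈ S := ⟨Set.mem_Icc.mpr ⟨le_trans hs.1.1 h1.le, h2⟩, hle⟩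
      exact absurd (le_csSup hSbdd htS) (not_le.mpr h1)
    have hanti : StrictAntiOn g (Set.Icc s T) := by
      apply strictAntiOn_of_deriv_neg (convex_Icc s T) hgc.continuousOn
      intro t ht
      rw [interior_Icc] at ht
      rw [(hg t).deriv]
      have hBt := hint t ht.1 ht.2.le
      have hout : R ^ 2 ≤ (x t) ^ 2 + (μ t) ^ 2 := by
        by_contra hco
        push_neg at hco
        have := hup (x t) (μ t) hco.le
        have h0 := hgnonneg 0
        simp only [hgdef] at this hBt ⊢
        linarith
      exact key (x t) (μ t) hout
    have hlt : g T < g s :=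
      hanti (Set.mem_Icc.mpr ⟨le_refl s, hsT.le⟩)
        (Set.mem_Icc.mpr ⟨hsT.le, le_refl T⟩) hsT
    linarith [hs.2]
  refine ⟨c2 * B, fun t ht => ?_⟩
  calc (x t) ^ 2 + (μ t) ^ 2 ≤ c2 * g t := hlow (x t) (μ t)
    _ ≤ c2 * B := mul_le_mul_of_nonneg_left (hbound t ht) hc2.le
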